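/- Under the hypotheses of the Recursion Rule setup (associative algebra B over R, unit A ∈ R, central cancellable η ∈ B, families X and D with X_v·X_w = A^{|det(v,w)|}X_{v+w} + A^{−|det(v,w)|}X_{v−w} + η·D(v,w)), assume additionally D(v,w) = 0 whenever |det(v,w)| ≤ 1, and X_{−v} = X_v for all v. Then specializing the Recursion Rule with u = (1,0), v = (p, q), w = (0,1) yields: A^{q}·D((p+1,q),(0,1)) = X_{(1,0)}·D((p,q),(0,1)) − A^{−q}·D((p−1,q),(0,1)) + A^{−p}·D((1,0),(p,q−1)) − D((1,0),(p,q))·X_{(0,1)} + A^{p}·D((1,0),(p,q+1)), for all integers p ≥ 1 and q ≥ 1. -/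
import Mathlib


/-- The determinant pairing `det((p,q),(r,s)) = p·s − r·q` on `ℤ²`. -/
def dett (v w : ℤ × ℤ) : ℤ := v.1 * w.2 - w.1 * v.2

theorem recursion_rule_specialized
    {R B : Type*} [CommRing R] [Ring B] [Algebra R B]
    (A : Rˣ) (η : B)
    (hcentral : ∀ b : B, η * b = b * η)
    (hcancel : ∀ x y : B, η * x = η * y → x = y)
    (X : ℤ × ℤ → B) (D : ℤ × ℤ → ℤ × ℤ → B)
    (hstr : ∀ v w : ℤ × ℤ,
      X v * X w = ((A ^ |dett v w| : Rˣ) : R) • X (v + w) +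
        ((A ^ (-|dett v w|) : Rˣ) : R) • X (v - w) + η * D v w)
    (hD1 : ∀ v w : ℤ × ℤ, |dett v w| ≤ 1 → D v w = 0)
    (hsym : ∀ v : ℤ × ℤ, X (-v) = X v)
    (p q : ℤ) (hp : 1 ≤ p) (hq : 1 ≤ q) :
    ((A ^ q : Rˣ) : R) • D (p + 1, q) (0, 1) =
      X (1, 0) * D (p, q) (0, 1) -
        ((A ^ (-q) : Rˣ) : R) • D (p - 1, q) (0, 1) +
        ((A ^ (-p) : Rˣ) : R) • D (1, 0) (p, q - 1) -
        D (1, 0) (p, q) * X (0, 1) +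
        ((A ^ p : Rˣ) : R) • D (1, 0) (p, q + 1) := by
  have exp : ∀ v w : ℤ × ℤ, ∀ m : ℤ, dett v w = m → 0 ≤ m →
      X v * X w = ((A ^ m : Rˣ) : R) • X (v + w) +
        ((A ^ (-m) : Rˣ) : R) • X (v - w) + η * D v w := by
    intro v w m hm hm0
    rw [hstr, hm, abs_of_nonneg hm0]
  have h1 : X (p, q) * X (0, 1) = ((A ^ p : Rˣ) : R) • X (p, q + 1) +
      ((A ^ (-p) : Rˣ) : R) • X (p, q - 1) + η * D (p, q) (0, 1) := by
    have := exp (p, q) (0, 1) p (by simp [dett]) (by omega)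
    simpa [Prod.mk_add_mk, Prod.mk_sub_mk] using this
  have h2 : X (1, 0) * X (p, q) = ((A ^ (q) : Rˣ) : R) • X (p + 1, q) +
      ((A ^ (-(q)) : Rˣ) : R) • X (p - 1, q) + η * D (1, 0) (p, q) := by
    have := exp (1, 0) (p, q) (q) (by simp [dett]) (by omega)
    have e : ((1 : ℤ), (0 : ℤ)) - (p, q) = -((p - 1, q) : ℤ × ℤ) := by
      simp only [Prod.mk_sub_mk, Prod.neg_mk, Prod.mk.injEq]
      constructor <;> ring
    rw [e, hsym] at this
    simpa [Prod.mk_add_mk, add_comm (1 : ℤ)] using this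
  have h3 : X (1, 0) * X (p, q + 1) = ((A ^ (q + 1) : Rˣ) : R) • X (p + 1, q + 1) +
      ((A ^ (-(q + 1)) : Rˣ) : R) • X (p - 1, q + 1) + η * D (1, 0) (p, q + 1) := by
    have := exp (1, 0) (p, q + 1) (q + 1) (by simp [dett]) (by omega)
    have e : ((1 : ℤ), (0 : ℤ)) - (p, q + 1) = -((p - 1, q + 1) : ℤ × ℤ) := by
      simp only [Prod.mk_sub_mk, Prod.neg_mk, Prod.mk.injEq]
      constructor <;> ring
    rw [e, hsym] at this
    simpa [Prod.mk_add_mk, add_comm (1 : ℤ)] using this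
  have h4 : X (1, 0) * X (p, q - 1) = ((A ^ (q - 1) : Rˣ) : R) • X (p + 1, q - 1) +
      ((A ^ (-(q - 1)) : Rˣ) : R) • X (p - 1, q - 1) + η * D (1, 0) (p, q - 1) := by
    have := exp (1, 0) (p, q - 1) (q - 1) (by simp [dett]) (by omega)
    have e : ((1 : ℤ), (0 : ℤ)) - (p, q - 1) = -((p - 1, q - 1) : ℤ × ℤ) := by
      simp only [Prod.mk_sub_mk, Prod.neg_mk, Prod.mk.injEq]
      constructor <;> ring
    rw [e, hsym] at this
    simpa [Prod.mk_add_mk, add_comm (1 : ℤ)] using this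
  have h5 : X (p + 1, q) * X (0, 1) = ((A ^ (p + 1) : Rˣ) : R) • X (p + 1, q + 1) +
      ((A ^ (-(p + 1)) : Rˣ) : R) • X (p + 1, q - 1) + η * D (p + 1, q) (0, 1) := by
    have := exp (p + 1, q) (0, 1) (p + 1) (by simp [dett]) (by omega)
    simpa [Prod.mk_add_mk, Prod.mk_sub_mk] using this
  have h6 : X (p - 1, q) * X (0, 1) = ((A ^ (p - 1) : Rˣ) : R) • X (p - 1, q + 1) +
      ((A ^ (-(p - 1)) : Rˣ) : R) • X (p - 1, q - 1) + η * D (p - 1, q) (0, 1) := by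
    have := exp (p - 1, q) (0, 1) (p - 1) (by simp [dett]) (by omega)
    simpa [Prod.mk_add_mk, Prod.mk_sub_mk] using this
  have heta : ∀ b c : B, b * (η * c) = η * (b * c) := by
    intro b c
    rw [← mul_assoc, ← hcentral, mul_assoc]
  have assoc := mul_assoc (X (1, 0)) (X (p, q)) (X (0, 1))
  rw [h1, h2] at assoc
  simp only [mul_add, add_mul, mul_smul_comm, smul_mul_assoc, heta] at assoc
  rw [h3, h4, h5, h6] at assoc
  simp only [smul_add, smul_smul, ← Units.val_mul, ← zpow_add] at assoc
  simp only [mul_assoc] at assoc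
  apply hcancel
  simp only [mul_add, mul_sub, mul_smul_comm]
  linear_combination (norm := match_scalars <;> ring_nf) assoc
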